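/- Let N ≥ 1 and let f : ℝ^N → ℝ be strictly positive (the same holds with ℝ replaced by any product of linearly ordered sets, e.g., {1,…,k}^N). Then f is MTP₂ — i.e., f(x ∨ y) · f(x ∧ y) ≥ f(x) · f(y) for all x, y ∈ ℝ^N, where ∨ and ∧ are the componentwise maximum and minimum — if and only if f is TP₂ in every pair of coordinates, i.e., the inequality f(x ∨ y) · f(x ∧ y) ≥ f(x) · f(y) holds for all pairs x, y that differ in at most two coordinates. -/

import Mathlib

section Aux

variable {N : ℕ}

/-- Key induction step: if `{n | y n < x n}` has at least 2 elements,
lower `x` at one such coordinate and use the inductive hypothesis twice. -/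
lemma mtp2_step (f : (Fin N → ℝ) → ℝ) (hpos : ∀ x, 0 < f x) (d : ℕ)
    (IH : ∀ x y : Fin N → ℝ, Set.ncard {n | x n ≠ y n} ≤ d →
      f (x ⊔ y) * f (x ⊓ y) ≥ f x * f y)
    (x y : Fin N → ℝ) (hcard : Set.ncard {n | x n ≠ y n} ≤ d + 1)
    (hA : 2 ≤ Set.ncard {n | y n < x n}) :
    f (x ⊔ y) * f (x ⊓ y) ≥ f x * f y := by
  have hAne : ({n | y n < x n} : Set (Fin N)).Nonempty := by
    rw [Set.nonempty_iff_ne_empty]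
    intro h
    rw [h] at hA
    simp at hA
  obtain ⟨i, hi⟩ := hAne
  have hiy : y i < x i := hi
  set m : Fin N → ℝ := Function.update x i (y i) with hm
  have hmi : m i = y i := by simp [hm]
  have hmn : ∀ n, n ≠ i → m n = x n := by intro n hn; simp [hm, hn]
  -- difference set of m, y
  have hset1 : {n | m n ≠ y n} = {n | x n ≠ y n} \ {i} := by
    ext n
    by_cases hn : n = i
    · subst hn; simp [hmi]
    · simp [hmn n hn, hn]
  -- m ⊓ y = x ⊓ y
  have hinf : m ⊓ y = x ⊓ y := by
    funext n
    by_cases hn : n = i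
    · subst hn
      simp [Pi.inf_apply, hmi, inf_eq_right.mpr (le_of_lt hiy)]
    · simp [Pi.inf_apply, hmn n hn]
  -- x ⊓ (m ⊔ y) = m
  have hxm : x ⊓ (m ⊔ y) = m := by
    funext n
    by_cases hn : n = i
    · subst hn
      simp [Pi.inf_apply, Pi.sup_apply, hmi, inf_eq_right.mpr (le_of_lt hiy)]
    · simp [Pi.inf_apply, Pi.sup_apply, hmn n hn]
  -- x ⊔ (m ⊔ y) = x ⊔ y
  have hxsup : x ⊔ (m ⊔ y) = x ⊔ y := by
    funext n
    by_cases hn : n = i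
    · subst hn
      simp [Pi.sup_apply, hmi]
    · simp [Pi.sup_apply, hmn n hn, ← sup_assoc]
  -- difference set of x and m ⊔ y
  have hset5 : {n | x n ≠ (m ⊔ y) n} = insert i {n | x n < y n} := by
    ext n
    by_cases hn : n = i
    · subst hn
      simp [Pi.sup_apply, hmi, ne_of_gt hiy]
    · simp only [Pi.sup_apply, hmn n hn, Set.mem_insert_iff, Set.mem_setOf_eq, hn, false_or]
      constructor
      · intro h
        by_contra hlt
        push_neg at hlt
        exact h (by simp [sup_eq_left.mpr hlt])
      · intro h
        rw [sup_eq_right.mpr (le_of_lt h)]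
        exact ne_of_lt h
  -- cardinality bookkeeping
  have hfinD : ({n | x n ≠ y n} : Set (Fin N)).Finite := Set.toFinite _
  have hiD : i ∈ {n | x n ≠ y n} := ne_of_gt hiy
  have hcard1 : Set.ncard {n | m n ≠ y n} ≤ d := by
    rw [hset1, Set.ncard_diff_singleton_of_mem hiD]
    omega
  have hunion : ({n | y n < x n} : Set (Fin N)) ∪ {n | x n < y n} = {n | x n ≠ y n} := by
    ext n
    simp only [Set.mem_union, Set.mem_setOf_eq]
    constructor
    · rintro (h | h)
      · exact ne_of_gt h
      · exact ne_of_lt h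
    · exact fun h => (lt_or_gt_of_ne h).symm
  have hdisj : Disjoint ({n | y n < x n} : Set (Fin N)) {n | x n < y n} := by
    rw [Set.disjoint_left]
    intro n h1 h2
    simp only [Set.mem_setOf_eq] at h1 h2
    exact lt_asymm h1 h2
  have hsum : Set.ncard ({n | y n < x n} : Set (Fin N)) + Set.ncard ({n | x n < y n} : Set (Fin N))
      = Set.ncard {n | x n ≠ y n} := by
    rw [← hunion, Set.ncard_union_eq hdisj (Set.toFinite _) (Set.toFinite _)]
  have hcard5 : Set.ncard {n | x n ≠ (m ⊔ y) n} ≤ d := by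
    rw [hset5]
    have := Set.ncard_insert_le i ({n | x n < y n} : Set (Fin N))
    omega
  -- apply the inductive hypothesis twice
  have h1 := IH m y hcard1
  rw [hinf] at h1
  have h2 := IH x (m ⊔ y) hcard5
  rw [hxsup, hxm] at h2
  -- combine
  have hm0 := hpos m
  have hmy0 := hpos (m ⊔ y)
  have hx0 := hpos x
  have hy0 := hpos y
  have hxy0 := hpos (x ⊔ y)
  have hxiy0 := hpos (x ⊓ y)
  have hkey : (f m * f y) * (f x * f (m ⊔ y)) ≤
      (f (m ⊔ y) * f (x ⊓ y)) * (f (x ⊔ y) * f m) :=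
    mul_le_mul h1 h2 (by positivity) (by positivity)
  have hcancel : (f m * f (m ⊔ y)) * (f x * f y) ≤ (f m * f (m ⊔ y)) * (f (x ⊔ y) * f (x ⊓ y)) := by
    nlinarith [hkey]
  exact le_of_mul_le_mul_left hcancel (by positivity)

end Aux

/-- A strictly positive function on `ℝ^N` is MTP₂ if and only if it is TP₂ in
every pair of coordinates, i.e. the MTP₂ inequality holds for all pairs of points differing
in at most two coordinates. -/
theorem mtp2_iff_pairwise_tp2 (N : ℕ) (hN : 1 ≤ N) (f : (Fin N → ℝ) → ℝ)
    (hpos : ∀ x, 0 < f x) :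
    (∀ x y : Fin N → ℝ, f (x ⊔ y) * f (x ⊓ y) ≥ f x * f y) ↔
      (∀ x y : Fin N → ℝ, Set.ncard {n | x n ≠ y n} ≤ 2 →
        f (x ⊔ y) * f (x ⊓ y) ≥ f x * f y) := by
  constructor
  · intro h x y _
    exact h x y
  · intro h2
    have main : ∀ d : ℕ, ∀ x y : Fin N → ℝ, Set.ncard {n | x n ≠ y n} ≤ d →
        f (x ⊔ y) * f (x ⊓ y) ≥ f x * f y := by
      intro d
      induction d with
      | zero => intro x y h; exact h2 x y (le_trans h (by norm_num))
      | succ d IH =>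
        intro x y hc
        by_cases hsmall : Set.ncard {n | x n ≠ y n} ≤ 2
        · exact h2 x y hsmall
        · push_neg at hsmall
          have hunion : ({n | y n < x n} : Set (Fin N)) ∪ {n | x n < y n} = {n | x n ≠ y n} := by
            ext n
            simp only [Set.mem_union, Set.mem_setOf_eq]
            constructor
            · rintro (h | h)
              · exact ne_of_gt h
              · exact ne_of_lt h
            · exact fun h => (lt_or_gt_of_ne h).symm
          have hdisj : Disjoint ({n | y n < x n} : Set (Fin N)) {n | x n < y n} := by
            rw [Set.disjoint_left]
            intro n ha hb
            simp only [Set.mem_setOf_eq] at ha hb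
            exact lt_asymm ha hb
          have hsum : Set.ncard ({n | y n < x n} : Set (Fin N)) +
              Set.ncard ({n | x n < y n} : Set (Fin N)) = Set.ncard {n | x n ≠ y n} := by
            rw [← hunion, Set.ncard_union_eq hdisj (Set.toFinite _) (Set.toFinite _)]
          rcases le_or_gt 2 (Set.ncard ({n | y n < x n} : Set (Fin N))) with hA | hA
          · exact mtp2_step f hpos d IH x y hc hA
          · have hB : 2 ≤ Set.ncard ({n | x n < y n} : Set (Fin N)) := by omega
            have hc' : Set.ncard {n | y n ≠ x n} ≤ d + 1 := by
              have : ({n | y n ≠ x n} : Set (Fin N)) = {n | x n ≠ y n} := by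
                ext n; exact ne_comm
              rwa [this]
            have := mtp2_step f hpos d IH y x hc' hB
            rwa [sup_comm, inf_comm, mul_comm (f y) (f x)] at this
    intro x y
    exact main N x y (le_trans (Set.ncard_le_ncard (Set.subset_univ _) (Set.toFinite _))
      (by simp [Set.ncard_univ]))
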